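/- Let n ≥ 2, let Γ ⊆ Γ¹ be a nonempty open symmetric convex subset of ℝⁿ, and let 𝔣 ∈ C¹(Γ) be concave with Σᵢ₌₁ⁿ ∂𝔣/∂λᵢ(μ) · μᵢ ≥ 0 for every μ ∈ Γ. Suppose L > 0 is such that L𝟏 ∈ Γ, and let ε > 0 and λ ∈ Γ satisfy 𝔣(L𝟏) > 𝔣(λ) + ε. Then Σᵢ₌₁ⁿ ∂𝔣/∂λᵢ(λ) > ε / L. -/

import Mathlib

/-- Let `Γ ⊆ Γ¹` be a nonempty open symmetric convex subset of `ℝⁿ`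
(`n ≥ 2`) and let `𝔣 ∈ C¹(Γ)` be concave with `Σᵢ ∂𝔣/∂λᵢ(μ) μᵢ ≥ 0` on `Γ`.
If `L > 0`, `L𝟏 ∈ Γ`, `ε > 0` and `λ ∈ Γ` satisfy `𝔣(L𝟏) > 𝔣(λ) + ε`, then
`Σᵢ ∂𝔣/∂λᵢ(λ) > ε / L`. -/
theorem sum_of_derivatives_positive_lower_bound
    (n : ℕ) (hn : 2 ≤ n)
    (Γ : Set (Fin n → ℝ)) (f : (Fin n → ℝ) → ℝ)
    (hΓne : Γ.Nonempty) (hΓopen : IsOpen Γ) (hΓconv : Convex ℝ Γ)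
    (hΓsymm : ∀ σ : Equiv.Perm (Fin n), ∀ x ∈ Γ, (x ∘ σ) ∈ Γ)
    (hΓsub : Γ ⊆ {x : Fin n → ℝ | 0 < ∑ i, x i})
    (hf_diff : ContDiffOn ℝ 1 f Γ)
    (hf_conc : ConcaveOn ℝ Γ f)
    (hf_euler : ∀ mu ∈ Γ, 0 ≤ ∑ i, fderiv ℝ f mu (Pi.single i 1) * mu i)
    (L : ℝ) (hL : 0 < L) (hLmem : (fun _ : Fin n => L) ∈ Γ)
    (ε : ℝ) (hε : 0 < ε)
    (lam : Fin n → ℝ) (hlam : lam ∈ Γ)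
    (hgap : f lam + ε < f (fun _ => L)) :
    ε / L < ∑ i, fderiv ℝ f lam (Pi.single i 1) := by
  set c : Fin n → ℝ := fun _ => L with hc
  have hd : DifferentiableAt ℝ f lam :=
    (hf_diff.differentiableOn one_ne_zero).differentiableAt (hΓopen.mem_nhds hlam)
  set φ := fderiv ℝ f lam with hφ
  -- expansion of φ on an arbitrary vector
  have hexp : ∀ x : Fin n → ℝ, φ x = ∑ i, x i * φ (Pi.single i 1) := by
    intro x
    conv_lhs => rw [pi_eq_sum_univ x, map_sum]
    refine Finset.sum_congr rfl fun i _ => ?_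
    rw [map_smul, smul_eq_mul]
    have hv : (fun j => if i = j then (1:ℝ) else 0) = Pi.single i 1 := by
      funext j; simp [Pi.single_apply, eq_comm]
    rw [hv]
  -- the affine line from lam to c
  set ℓ : ℝ →ᵃ[ℝ] (Fin n → ℝ) := AffineMap.lineMap lam c with hℓ
  have hgc : ConcaveOn ℝ (ℓ ⁻¹' Γ) (f ∘ ℓ) := hf_conc.comp_affineMap ℓ
  have h0 : (0 : ℝ) ∈ ℓ ⁻¹' Γ := by
    simpa [hℓ, AffineMap.lineMap_apply_zero] using hlam
  have h1 : (1 : ℝ) ∈ ℓ ⁻¹' Γ := by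
    simpa [hℓ, AffineMap.lineMap_apply_one] using hLmem
  have hlin : HasDerivAt (fun t : ℝ => ℓ t) (c - lam) 0 := by
    have : HasDerivAt (fun t : ℝ => t • (c - lam) + lam) ((1 : ℝ) • (c - lam)) 0 :=
      ((hasDerivAt_id (0 : ℝ)).smul_const (c - lam)).add_const lam
    simpa [hℓ, AffineMap.lineMap_apply] using this
  have hder : HasDerivAt (f ∘ ℓ) (φ (c - lam)) 0 := by
    have hf0 : HasFDerivAt f φ (ℓ 0) := by
      rw [show ℓ (0:ℝ) = lam by simp [hℓ, AffineMap.lineMap_apply_zero]]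
      exact hd.hasFDerivAt
    exact hf0.comp_hasDerivAt 0 hlin
  have hslope : slope (f ∘ ℓ) 0 1 ≤ φ (c - lam) :=
    hgc.slope_le_of_hasDerivAt h0 h1 zero_lt_one hder
  have hslope' : f c - f lam ≤ φ (c - lam) := by
    have : slope (f ∘ ℓ) 0 1 = f c - f lam := by
      simp [slope_def_field, hℓ, AffineMap.lineMap_apply_zero, AffineMap.lineMap_apply_one,
        Function.comp]
    rw [this] at hslope; exact hslope
  have heuler : 0 ≤ φ lam := by
    rw [hexp lam]
    simpa [mul_comm] using hf_euler lam hlam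
  have hφc : φ c = L * ∑ i, φ (Pi.single i 1) := by
    rw [hexp c, Finset.mul_sum]
  have hkey : ε < L * ∑ i, φ (Pi.single i 1) := by
    have h2 : φ (c - lam) = φ c - φ lam := map_sub φ c lam
    have hgap' : f lam + ε < f c := hgap
    rw [h2] at hslope'
    linarith [hφc ▸ hslope']
  rw [div_lt_iff₀ hL]
  linarith [hkey]
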